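/- Let à be an Abelian category, C̃ ⊆ à a thick torsion subcategory, and A ⊆ à a thick full Abelian subcategory such that the composition A ↪ à → Ã/C̃ is essentially surjective. Then with C := C̃ ∩ A, the induced functor A/C → Ã/C̃ is an equivalence of categories. -/

import Mathlib

open CategoryTheory Limits

/-- A thick subcategory of an Abelian category. -/
def IsThick {A : Type*} [Category A] [Abelian A] (C : A → Prop) : Prop :=
  (∃ X, C X) ∧
    ∀ (S : CategoryTheory.ShortComplex A), S.ShortExact →
      ((C S.X₂ → C S.X₁ ∧ C S.X₃) ∧ (C S.X₁ → C S.X₃ → C S.X₂))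

/-- `C` is a torsion subcategory: every object has a maximal subobject in `C`. -/
def IsTorsion {A : Type*} [Category A] [Abelian A] (C : A → Prop) : Prop :=
  ∀ M : A, ∃ t : Subobject M, C ((t : A)) ∧ ∀ s : Subobject M, C ((s : A)) → s ≤ t

/-- The class of morphisms with kernel and cokernel in `C`; the Serre quotient `Ã/C̃` is the
localization of `Ã` at this class, with canonical quotient functor `(serreW C).Q`. -/
def serreW {A : Type*} [Category A] [Abelian A] (C : A → Prop) : MorphismProperty A :=
  fun _ _ f => C (kernel f) ∧ C (cokernel f)

/-- For a thick subcategory `A ⊆ Ã` (given by the predicate `P`) the class of morphisms of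
`A` with kernel and cokernel (computed in `Ã`, equivalently in the thick Abelian subcategory
`A`) lying in `C̃` — since `A` is thick, these kernels and cokernels automatically lie in `A`,
so this is the class of morphisms with kernel and cokernel in `C = C̃ ∩ A`, and the Serre
quotient `A/C` is the localization of `A` at this class. -/
def serreWRes {At : Type*} [Category At] [Abelian At] (Ct : At → Prop) (P : At → Prop) :
    MorphismProperty (ObjectProperty.FullSubcategory P) :=
  fun _ _ f => Ct (kernel f.hom) ∧ Ct (cokernel f.hom)

namespace SecondIsoAux

open CategoryTheory.Abelian (Pseudoelement)
open scoped Pseudoelement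

section Basics

variable {A : Type*} [Category A] [Abelian A] {C : A → Prop}

lemma thickSub (hC : IsThick C) {X Y : A} (i : X ⟶ Y) [Mono i] (hY : C Y) : C X := by
  have hse : (ShortComplex.mk i (cokernel.π i) (cokernel.condition i)).ShortExact :=
    { exact := ShortComplex.exact_of_g_is_cokernel _ (cokernelIsCokernel i) }
  exact ((hC.2 _ hse).1 hY).1

lemma thickQuot (hC : IsThick C) {X Y : A} (p : X ⟶ Y) [Epi p] (hX : C X) : C Y := by
  have hse : (ShortComplex.mk (kernel.ι p) p (kernel.condition p)).ShortExact :=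
    { exact := ShortComplex.exact_of_f_is_kernel _ (kernelIsKernel p) }
  exact ((hC.2 _ hse).1 hX).2

lemma thickIso (hC : IsThick C) {X Y : A} (e : X ≅ Y) (hX : C X) : C Y :=
  thickSub hC e.inv hX

lemma thickZero (hC : IsThick C) {Z : A} (hZ : IsZero Z) : C Z := by
  obtain ⟨X, hX⟩ := hC.1
  have : Mono (hZ.to_ X) := ⟨fun g h _ => hZ.eq_of_tgt g h⟩
  exact thickSub hC (hZ.to_ X) hX

lemma thickExt (hC : IsThick C) {S : ShortComplex A} (hse : S.ShortExact)
    (h1 : C S.X₁) (h3 : C S.X₃) : C S.X₂ :=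
  (hC.2 _ hse).2 h1 h3

/-- For any `m`, `0 ⟶ ker m ⟶ X ⟶ im m ⟶ 0` is short exact. -/
lemma shortExact_kernel_factorThruImage {X Y : A} (m : X ⟶ Y) :
    (ShortComplex.mk (kernel.ι m) (factorThruImage m)
      (by rw [← cancel_mono (image.ι m), Category.assoc, image.fac, zero_comp,
        kernel.condition])).ShortExact := by
  have hex : (ShortComplex.mk (kernel.ι m) (factorThruImage m)
      (by rw [← cancel_mono (image.ι m), Category.assoc, image.fac, zero_comp,
        kernel.condition])).Exact := by
    apply Abelian.Pseudoelement.exact_of_pseudo_exact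
    intro b hb
    have hmb : Abelian.Pseudoelement.pseudoApply m b = 0 := by
      rw [← image.fac m, Abelian.Pseudoelement.comp_apply, hb,
        Abelian.Pseudoelement.apply_zero]
    have hex1 : (ShortComplex.mk (kernel.ι m) m (kernel.condition m)).Exact :=
      ShortComplex.exact_of_f_is_kernel _ (kernelIsKernel m)
    exact Abelian.Pseudoelement.pseudo_exact_of_exact hex1 b hmb
  exact { exact := hex }

/-- For any `n`, `0 ⟶ im n ⟶ Y ⟶ coker n ⟶ 0` is short exact. -/
lemma shortExact_image_cokernel {X Y : A} (n : X ⟶ Y) :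
    (ShortComplex.mk (image.ι n) (cokernel.π n)
      (by rw [← cancel_epi (factorThruImage n), ← Category.assoc, image.fac, comp_zero,
        cokernel.condition])).ShortExact := by
  have hex : (ShortComplex.mk (image.ι n) (cokernel.π n)
      (by rw [← cancel_epi (factorThruImage n), ← Category.assoc, image.fac, comp_zero,
        cokernel.condition])).Exact := by
    apply Abelian.Pseudoelement.exact_of_pseudo_exact
    intro b hb
    have hex2 : (ShortComplex.mk n (cokernel.π n) (cokernel.condition n)).Exact :=
      ShortComplex.exact_of_g_is_cokernel _ (cokernelIsCokernel n)
    obtain ⟨a, ha⟩ := Abelian.Pseudoelement.pseudo_exact_of_exact hex2 b hb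
    refine ⟨Abelian.Pseudoelement.pseudoApply (factorThruImage n) a, ?_⟩
    show Abelian.Pseudoelement.pseudoApply (image.ι n)
      (Abelian.Pseudoelement.pseudoApply (factorThruImage n) a) = b
    rw [← Abelian.Pseudoelement.comp_apply, image.fac]
    exact ha
  exact { exact := hex }

lemma serreW_id (hC : IsThick C) (X : A) : serreW C (𝟙 X) :=
  ⟨thickIso hC (kernel.ofMono (𝟙 X)).symm (thickZero hC (isZero_zero A)),
   thickIso hC (cokernel.ofEpi (𝟙 X)).symm (thickZero hC (isZero_zero A))⟩

lemma serreW_comp (hC : IsThick C) {X Y Z : A} {f : X ⟶ Y} {g : Y ⟶ Z}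
    (hf : serreW C f) (hg : serreW C g) : serreW C (f ≫ g) := by
  constructor
  · -- kernel part
    let m : kernel (f ≫ g) ⟶ kernel g :=
      kernel.lift g (kernel.ι (f ≫ g) ≫ f) (by rw [Category.assoc, kernel.condition])
    have hm : m ≫ kernel.ι g = kernel.ι (f ≫ g) ≫ f := kernel.lift_ι _ _ _
    -- kernel m is a subobject of kernel f
    have hj0 : (kernel.ι m ≫ kernel.ι (f ≫ g)) ≫ f = 0 := by
      rw [Category.assoc, ← hm, ← Category.assoc, kernel.condition, zero_comp]
    let j : kernel m ⟶ kernel f := kernel.lift f (kernel.ι m ≫ kernel.ι (f ≫ g)) hj0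
    have hjι : j ≫ kernel.ι f = kernel.ι m ≫ kernel.ι (f ≫ g) := kernel.lift_ι _ _ _
    haveI : Mono j := mono_of_mono_fac hjι
    have h1 : C (kernel m) := thickSub hC j hf.1
    have h3 : C (image m) := thickSub hC (image.ι m) hg.1
    exact thickExt hC (shortExact_kernel_factorThruImage m) h1 h3
  · -- cokernel part
    let n : cokernel f ⟶ cokernel (f ≫ g) :=
      cokernel.desc f (g ≫ cokernel.π (f ≫ g)) (by rw [← Category.assoc, cokernel.condition])
    have hn : cokernel.π f ≫ n = g ≫ cokernel.π (f ≫ g) := cokernel.π_desc _ _ _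
    -- image n is a quotient of cokernel f
    haveI : Epi (factorThruImage n) := inferInstance
    have h1 : C (image n) := thickQuot hC (factorThruImage n) hf.2
    -- cokernel n is a quotient of cokernel g
    have hv0 : g ≫ cokernel.π (f ≫ g) ≫ cokernel.π n = 0 := by
      rw [← Category.assoc, ← hn, Category.assoc, cokernel.condition, comp_zero]
    let v : cokernel g ⟶ cokernel n :=
      cokernel.desc g (cokernel.π (f ≫ g) ≫ cokernel.π n) hv0
    have hvπ : cokernel.π g ≫ v = cokernel.π (f ≫ g) ≫ cokernel.π n := cokernel.π_desc _ _ _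
    haveI : Epi (cokernel.π (f ≫ g) ≫ cokernel.π n) := epi_comp _ _
    haveI : Epi v := epi_of_epi_fac hvπ
    have h3 : C (cokernel n) := thickQuot hC v hg.2
    exact thickExt hC (shortExact_image_cokernel n) h1 h3

/-- Cancellation: if `a ≫ i ∈ W` with `i` mono, then `a ∈ W`. -/
lemma serreW_of_comp_mono (hC : IsThick C) {X M' M : A} (a : X ⟶ M') (i : M' ⟶ M) [Mono i]
    (h : serreW C (a ≫ i)) : serreW C a := by
  constructor
  · -- kernel a ↪ kernel (a ≫ i)
    have hκ0 : kernel.ι a ≫ a ≫ i = 0 := by rw [← Category.assoc, kernel.condition, zero_comp]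
    let κ : kernel a ⟶ kernel (a ≫ i) := kernel.lift (a ≫ i) (kernel.ι a) hκ0
    have hκι : κ ≫ kernel.ι (a ≫ i) = kernel.ι a := kernel.lift_ι _ _ _
    haveI : Mono κ := mono_of_mono_fac hκι
    exact thickSub hC κ h.1
  · -- cokernel a ↪ cokernel (a ≫ i)
    have hv0 : a ≫ i ≫ cokernel.π (a ≫ i) = 0 := by
      rw [← Category.assoc, cokernel.condition]
    let v : cokernel a ⟶ cokernel (a ≫ i) := cokernel.desc a (i ≫ cokernel.π (a ≫ i)) hv0
    have hvπ : cokernel.π a ≫ v = i ≫ cokernel.π (a ≫ i) := cokernel.π_desc _ _ _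
    haveI : Mono v := by
      apply Abelian.Pseudoelement.mono_of_zero_of_map_zero
      intro x hx
      obtain ⟨m', rfl⟩ := Abelian.Pseudoelement.pseudo_surjective_of_epi (cokernel.π a) x
      rw [← Abelian.Pseudoelement.comp_apply, hvπ, Abelian.Pseudoelement.comp_apply] at hx
      have hex2 : (ShortComplex.mk (a ≫ i) (cokernel.π (a ≫ i))
          (cokernel.condition _)).Exact :=
        ShortComplex.exact_of_g_is_cokernel _ (cokernelIsCokernel _)
      obtain ⟨w, hw⟩ := Abelian.Pseudoelement.pseudo_exact_of_exact hex2 _ hx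
      rw [Abelian.Pseudoelement.comp_apply] at hw
      have hw' : Abelian.Pseudoelement.pseudoApply a w = m' :=
        Abelian.Pseudoelement.pseudo_injective_of_mono i hw
      rw [← hw', ← Abelian.Pseudoelement.comp_apply, cokernel.condition,
        Abelian.Pseudoelement.zero_apply]
    exact thickSub hC v h.2


lemma pseudo_id_apply {X : A} (a : Pseudoelement X) :
    Abelian.Pseudoelement.pseudoApply (𝟙 X) a = a := by
  refine Quotient.inductionOn a (fun a' => ?_)
  rw [Abelian.Pseudoelement.pseudoApply_mk']
  apply Quotient.sound
  exact ⟨a'.left, 𝟙 _, 𝟙 _, inferInstance, inferInstance, by simp⟩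

/-- The Ore condition data for `serreW C`. -/
lemma serreW_ore (hC : IsThick C) {X B Y : A} (s : X ⟶ B) (f : X ⟶ Y) (hs : serreW C s) :
    ∃ (Q : A) (g : B ⟶ Q) (t : Y ⟶ Q) (e : B ⊞ Y ⟶ Q),
      Epi e ∧ serreW C t ∧ f ≫ t = s ≫ g := by
  let l : X ⟶ B ⊞ Y := biprod.lift s (-f)
  let e : B ⊞ Y ⟶ cokernel l := cokernel.π l
  let g : B ⟶ cokernel l := biprod.inl ≫ e
  let t : Y ⟶ cokernel l := biprod.inr ≫ e
  have hsq : f ≫ t = s ≫ g := by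
    have h0 : biprod.lift s (-f) ≫ e = 0 := cokernel.condition l
    rw [biprod.lift_eq] at h0
    simp only [Preadditive.add_comp, Preadditive.neg_comp, Category.assoc] at h0
    have h1 := add_neg_eq_zero.mp h0
    show f ≫ biprod.inr ≫ e = s ≫ biprod.inl ≫ e
    exact h1.symm
  have hexl : (ShortComplex.mk l e (cokernel.condition l)).Exact :=
    ShortComplex.exact_of_g_is_cokernel _ (cokernelIsCokernel l)
  refine ⟨cokernel l, g, t, e, inferInstance, ⟨?_, ?_⟩, hsq⟩
  · -- kernel t is a quotient of kernel s
    have hκ0 : (kernel.ι s ≫ (-f)) ≫ t = 0 := by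
      rw [Category.assoc, Preadditive.neg_comp, hsq, Preadditive.comp_neg,
        kernel.condition_assoc, zero_comp, neg_zero]
    let κ : kernel s ⟶ kernel t := kernel.lift t (kernel.ι s ≫ (-f)) hκ0
    have hκι : κ ≫ kernel.ι t = kernel.ι s ≫ (-f) := kernel.lift_ι _ _ _
    haveI : Epi κ := by
      apply Abelian.Pseudoelement.epi_of_pseudo_surjective
      intro y
      have h1 : Abelian.Pseudoelement.pseudoApply e
          (Abelian.Pseudoelement.pseudoApply biprod.inr
            (Abelian.Pseudoelement.pseudoApply (kernel.ι t) y)) = 0 := by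
        rw [← Abelian.Pseudoelement.comp_apply, ← Abelian.Pseudoelement.comp_apply]
        have h0 : kernel.ι t ≫ biprod.inr ≫ e = 0 := kernel.condition t
        rw [h0, Abelian.Pseudoelement.zero_apply]
      obtain ⟨a, ha⟩ := Abelian.Pseudoelement.pseudo_exact_of_exact hexl _ h1
      have hsa : Abelian.Pseudoelement.pseudoApply s a = 0 := by
        rw [← biprod.lift_fst s (-f), Abelian.Pseudoelement.comp_apply]
        show Abelian.Pseudoelement.pseudoApply biprod.fst
          (Abelian.Pseudoelement.pseudoApply l a) = 0
        rw [ha, ← Abelian.Pseudoelement.comp_apply, biprod.inr_fst,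
          Abelian.Pseudoelement.zero_apply]
      have hexs : (ShortComplex.mk (kernel.ι s) s (kernel.condition s)).Exact :=
        ShortComplex.exact_of_f_is_kernel _ (kernelIsKernel s)
      obtain ⟨x, hx⟩ := Abelian.Pseudoelement.pseudo_exact_of_exact hexs a hsa
      refine ⟨x, Abelian.Pseudoelement.pseudo_injective_of_mono (kernel.ι t) ?_⟩
      rw [← Abelian.Pseudoelement.comp_apply, hκι, Abelian.Pseudoelement.comp_apply]
      show Abelian.Pseudoelement.pseudoApply (-f)
          (Abelian.Pseudoelement.pseudoApply (kernel.ι s) x) =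
        Abelian.Pseudoelement.pseudoApply (kernel.ι t) y
      rw [hx, ← biprod.lift_snd s (-f), Abelian.Pseudoelement.comp_apply]
      show Abelian.Pseudoelement.pseudoApply biprod.snd
          (Abelian.Pseudoelement.pseudoApply l a) = _
      rw [ha, ← Abelian.Pseudoelement.comp_apply, biprod.inr_snd, pseudo_id_apply]
    exact thickQuot hC κ hs.1
  · -- cokernel t is a quotient of cokernel s
    have hw0 : s ≫ g ≫ cokernel.π t = 0 := by
      rw [← Category.assoc, ← hsq, Category.assoc, cokernel.condition, comp_zero]
    let w : cokernel s ⟶ cokernel t := cokernel.desc s (g ≫ cokernel.π t) hw0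
    have hwπ : cokernel.π s ≫ w = g ≫ cokernel.π t := cokernel.π_desc _ _ _
    haveI : Epi (g ≫ cokernel.π t) := by
      constructor
      intro T u v huv
      have h2 : e ≫ cokernel.π t ≫ u = e ≫ cokernel.π t ≫ v := by
        apply biprod.hom_ext'
        · simpa only [g, Category.assoc] using huv
        · have h00 : (biprod.inr ≫ e) ≫ cokernel.π t = 0 := cokernel.condition t
          simp only [← Category.assoc]
          rw [h00, zero_comp, zero_comp]
      have h3 : cokernel.π t ≫ u = cokernel.π t ≫ v := (cancel_epi e).1 h2
      exact (cancel_epi (cokernel.π t)).1 h3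
    haveI : Epi w := epi_of_epi_fac hwπ
    exact thickQuot hC w hs.2

/-- The equalization (ext) condition for `serreW C`. -/
lemma serreW_ext (hC : IsThick C) {X' X Y : A} (f₁ f₂ : X ⟶ Y) (s : X' ⟶ X)
    (hs : serreW C s) (hfac : s ≫ f₁ = s ≫ f₂) :
    ∃ (Q : A) (t : Y ⟶ Q), Epi t ∧ serreW C t ∧ f₁ ≫ t = f₂ ≫ t := by
  have hsh : s ≫ (f₁ - f₂) = 0 := by
    rw [Preadditive.comp_sub, hfac, sub_self]
  set h : X ⟶ Y := f₁ - f₂ with hh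
  set t := cokernel.π h with hht
  have hft : f₁ ≫ t = f₂ ≫ t := by
    have h1 : (f₁ - f₂) ≫ t = 0 := cokernel.condition h
    rwa [Preadditive.sub_comp, sub_eq_zero] at h1
  refine ⟨cokernel h, t, inferInstance, ⟨?_, ?_⟩, hft⟩
  · let h' : cokernel s ⟶ Y := cokernel.desc s h hsh
    have hh' : cokernel.π s ≫ h' = h := cokernel.π_desc _ _ _
    have hq0 : h' ≫ t = 0 := by
      rw [← cancel_epi (cokernel.π s), ← Category.assoc, hh', cokernel.condition, comp_zero]
    let q : cokernel s ⟶ kernel t := kernel.lift t h' hq0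
    have hqι : q ≫ kernel.ι t = h' := kernel.lift_ι _ _ _
    haveI : Epi q := by
      apply Abelian.Pseudoelement.epi_of_pseudo_surjective
      intro z
      have h1 : Abelian.Pseudoelement.pseudoApply t
          (Abelian.Pseudoelement.pseudoApply (kernel.ι t) z) = 0 := by
        rw [← Abelian.Pseudoelement.comp_apply, kernel.condition,
          Abelian.Pseudoelement.zero_apply]
      have hexh : (ShortComplex.mk h (cokernel.π h) (cokernel.condition h)).Exact :=
        ShortComplex.exact_of_g_is_cokernel _ (cokernelIsCokernel h)
      obtain ⟨x, hx⟩ := Abelian.Pseudoelement.pseudo_exact_of_exact hexh _ h1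
      refine ⟨Abelian.Pseudoelement.pseudoApply (cokernel.π s) x,
        Abelian.Pseudoelement.pseudo_injective_of_mono (kernel.ι t) ?_⟩
      rw [← Abelian.Pseudoelement.comp_apply, hqι, ← Abelian.Pseudoelement.comp_apply, hh']
      exact hx
    exact thickQuot hC q hs.2
  · exact thickIso hC (cokernel.ofEpi t).symm (thickZero hC (isZero_zero A))

end Basics


section Loc

variable {At : Type*} [Category At] [Abelian At] {Ct : At → Prop} {P : At → Prop}

lemma isMultiplicative_serreW (hC : IsThick Ct) : (serreW Ct).IsMultiplicative where
  id_mem := fun X => serreW_id hC X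
  comp_mem := fun f g hf hg => serreW_comp hC hf hg

lemma hasLeftCalculus_serreW (hC : IsThick Ct) :
    (serreW Ct).HasLeftCalculusOfFractions where
  toIsMultiplicative := isMultiplicative_serreW hC
  exists_leftFraction := fun X Y φ => by
    obtain ⟨Q, g, t, e, he, ht, hsq⟩ := serreW_ore hC φ.s φ.f φ.hs
    exact ⟨⟨g, t, ht⟩, hsq⟩
  ext := fun X' X Y f₁ f₂ s hs hfac => by
    obtain ⟨Q, t, _, ht, h⟩ := serreW_ext hC f₁ f₂ s hs hfac
    exact ⟨Q, t, ht, h⟩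

lemma P_biprod (hP : IsThick P) {X Y : At} (hX : P X) (hY : P Y) : P (X ⊞ Y) := by
  have hsp := ShortComplex.Splitting.ofHasBinaryBiproduct (C := At) X Y
  have hse : (ShortComplex.mk (biprod.inl : X ⟶ X ⊞ Y) (biprod.snd : X ⊞ Y ⟶ Y)
      (by simp)).ShortExact :=
    { exact := hsp.exact, mono_f := hsp.mono_f, epi_g := hsp.epi_g }
  exact thickExt hP hse hX hY

lemma isMultiplicative_serreWRes (hC : IsThick Ct) : (serreWRes Ct P).IsMultiplicative where
  id_mem := fun X => serreW_id hC X.obj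
  comp_mem := fun f g hf hg => serreW_comp hC hf hg

lemma hasLeftCalculus_serreWRes (hC : IsThick Ct) (hP : IsThick P) :
    (serreWRes Ct P).HasLeftCalculusOfFractions where
  toIsMultiplicative := isMultiplicative_serreWRes hC
  exists_leftFraction := fun X Y φ => by
    obtain ⟨Q, g, t, e, he, ht, hsq⟩ :=
      serreW_ore hC (φ.s.hom : φ.X'.obj ⟶ X.obj) (φ.f.hom : φ.X'.obj ⟶ Y.obj) φ.hs
    haveI := he
    have hQ : P Q := thickQuot hP e (P_biprod hP X.2 Y.2)
    exact ⟨MorphismProperty.LeftFraction.mk (Y' := (⟨Q, hQ⟩ : ObjectProperty.FullSubcategory P)) (ObjectProperty.homMk g)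
      (ObjectProperty.homMk t) ht, ObjectProperty.hom_ext _ hsq⟩
  ext := fun X' X Y f₁ f₂ s hs hfac => by
    obtain ⟨Q, t, hepi, ht, h⟩ := serreW_ext hC (f₁.hom : X.obj ⟶ Y.obj) f₂.hom s.hom hs
      (congrArg (fun k => k.hom) hfac)
    haveI := hepi
    refine ⟨(⟨Q, thickQuot hP t Y.2⟩ : ObjectProperty.FullSubcategory P), ObjectProperty.homMk t, ?_,
      ObjectProperty.hom_ext _ h⟩
    exact ht

variable (Ct P) in
/-- The ambient fraction underlying a fraction in the subcategory. -/
def atFrac {X Y : ObjectProperty.FullSubcategory P} (φ : (serreWRes Ct P).LeftFraction X Y) :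
    (serreW Ct).LeftFraction X.obj Y.obj :=
  ⟨φ.f.hom, φ.s.hom, φ.hs⟩

lemma shrink (hC : IsThick Ct) (hP : IsThick P) {X Y : ObjectProperty.FullSubcategory P}
    (φ : (serreW Ct).LeftFraction X.obj Y.obj) :
    ∃ (ψ : (serreWRes Ct P).LeftFraction X Y) (i : ψ.Y'.obj ⟶ φ.Y'),
      Mono i ∧ ((ObjectProperty.ι P).map ψ.f ≫ i = φ.f) ∧
        ((ObjectProperty.ι P).map ψ.s ≫ i = φ.s) := by
  let d : X.obj ⊞ Y.obj ⟶ φ.Y' := biprod.desc φ.f φ.s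
  have hM : P (image d) := thickQuot hP (factorThruImage d) (P_biprod hP X.2 Y.2)
  let f' : X.obj ⟶ image d := biprod.inl ≫ factorThruImage d
  let s' : Y.obj ⟶ image d := biprod.inr ≫ factorThruImage d
  have hf' : f' ≫ image.ι d = φ.f := by
    show (biprod.inl ≫ factorThruImage d) ≫ image.ι d = φ.f
    rw [Category.assoc, image.fac, biprod.inl_desc]
  have hs' : s' ≫ image.ι d = φ.s := by
    show (biprod.inr ≫ factorThruImage d) ≫ image.ι d = φ.s
    rw [Category.assoc, image.fac, biprod.inr_desc]
  have hw : serreW Ct s' := by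
    apply serreW_of_comp_mono hC s' (image.ι d)
    rw [hs']; exact φ.hs
  refine ⟨MorphismProperty.LeftFraction.mk (Y' := (⟨image d, hM⟩ : ObjectProperty.FullSubcategory P))
    (ObjectProperty.homMk f') (ObjectProperty.homMk s') hw,
    image.ι d, inferInstance, ?_, ?_⟩
  · exact hf'
  · exact hs'


lemma shrinkRel (hC : IsThick Ct) (hP : IsThick P) {X Y : ObjectProperty.FullSubcategory P}
    (φ₁ φ₂ : (serreWRes Ct P).LeftFraction X Y)
    (h : MorphismProperty.LeftFractionRel (atFrac Ct P φ₁) (atFrac Ct P φ₂)) :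
    MorphismProperty.LeftFractionRel φ₁ φ₂ := by
  obtain ⟨Z, t₁, t₂, hst, hft, hw⟩ := h
  let d : φ₁.Y'.obj ⊞ φ₂.Y'.obj ⟶ Z := biprod.desc t₁ t₂
  have hM : P (image d) := thickQuot hP (factorThruImage d) (P_biprod hP φ₁.Y'.2 φ₂.Y'.2)
  let u₁ : φ₁.Y'.obj ⟶ image d := biprod.inl ≫ factorThruImage d
  let u₂ : φ₂.Y'.obj ⟶ image d := biprod.inr ≫ factorThruImage d
  have hu₁ : u₁ ≫ image.ι d = t₁ := by
    show (biprod.inl ≫ factorThruImage d) ≫ image.ι d = t₁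
    rw [Category.assoc, image.fac]; exact biprod.inl_desc _ _
  have hu₂ : u₂ ≫ image.ι d = t₂ := by
    show (biprod.inr ≫ factorThruImage d) ≫ image.ι d = t₂
    rw [Category.assoc, image.fac]; exact biprod.inr_desc _ _
  have hs12 : (ObjectProperty.ι P).map φ₁.s ≫ u₁
      = (ObjectProperty.ι P).map φ₂.s ≫ u₂ := by
    apply (cancel_mono (image.ι d)).1
    rw [Category.assoc _ u₁ (image.ι d), Category.assoc _ u₂ (image.ι d), hu₁, hu₂]
    exact hst
  have hf12 : (ObjectProperty.ι P).map φ₁.f ≫ u₁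
      = (ObjectProperty.ι P).map φ₂.f ≫ u₂ := by
    apply (cancel_mono (image.ι d)).1
    rw [Category.assoc _ u₁ (image.ι d), Category.assoc _ u₂ (image.ι d), hu₁, hu₂]
    exact hft
  have hw' : serreW Ct ((ObjectProperty.ι P).map φ₁.s ≫ u₁) := by
    apply serreW_of_comp_mono hC _ (image.ι d)
    rw [Category.assoc _ u₁ (image.ι d), hu₁]
    exact hw
  refine ⟨(⟨image d, hM⟩ : ObjectProperty.FullSubcategory P), ObjectProperty.homMk u₁,
    ObjectProperty.homMk u₂, ?_, ?_, ?_⟩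
  · exact ObjectProperty.hom_ext _ hs12
  · exact ObjectProperty.hom_ext _ hf12
  · exact hw'

end Loc

end SecondIsoAux

/-- **second isomorphism theorem.** Let `Ã` be an Abelian category,
`C̃ ⊆ Ã` a thick torsion subcategory, and `A ⊆ Ã` a thick full Abelian subcategory such that
the composition `A ↪ Ã ⥤ Ã/C̃` is essentially surjective.  Then with `C := C̃ ∩ A`, the
induced functor `A/C ⥤ Ã/C̃` (the unique functor commuting with the quotient functors) is an
equivalence of categories. -/
theorem second_isomorphism_theorem
    {At : Type*} [Category At] [Abelian At] (Ct : At → Prop)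
    (hCt : IsThick Ct) (hTor : IsTorsion Ct)
    (P : At → Prop) (hP : IsThick P)
    (hess : (ObjectProperty.ι P ⋙ (serreW Ct).Q).EssSurj)
    (H : (serreWRes Ct P).Localization ⥤ (serreW Ct).Localization)
    (hH : (serreWRes Ct P).Q ⋙ H = ObjectProperty.ι P ⋙ (serreW Ct).Q) :
    H.IsEquivalence := by
  haveI hW₂ : (serreW Ct).HasLeftCalculusOfFractions := SecondIsoAux.hasLeftCalculus_serreW hCt
  haveI hW₁ : (serreWRes Ct P).HasLeftCalculusOfFractions :=
    SecondIsoAux.hasLeftCalculus_serreWRes hCt hP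
  let L := (serreW Ct).Q
  let Q₁ := (serreWRes Ct P).Q
  let e : (serreWRes Ct P).Q ⋙ H ≅ ObjectProperty.ι P ⋙ (serreW Ct).Q := eqToIso hH
  have heiso : ∀ (X : ObjectProperty.FullSubcategory P), IsIso (e.hom.app X) := fun X =>
    ⟨e.inv.app X, by simp, by simp⟩
  -- the key computation
  have key : ∀ (X Y : ObjectProperty.FullSubcategory P) (φ : (serreWRes Ct P).LeftFraction X Y),
      H.map (φ.map Q₁ (Localization.inverts Q₁ (serreWRes Ct P))) =
        e.hom.app X ≫ (SecondIsoAux.atFrac Ct P φ).map L (Localization.inverts L (serreW Ct)) ≫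
          e.inv.app Y := by
    intro X Y φ
    have hnat : ∀ {X' Y' : ObjectProperty.FullSubcategory P} (u : X' ⟶ Y'),
        H.map (Q₁.map u) =
          e.hom.app X' ≫ L.map ((ObjectProperty.ι P).map u) ≫ e.inv.app Y' :=
      fun u => (NatIso.naturality_2 e u).symm
    haveI h1 : IsIso (Q₁.map φ.s) := Localization.inverts Q₁ (serreWRes Ct P) _ φ.hs
    haveI h2 : IsIso (H.map (Q₁.map φ.s)) := inferInstance
    rw [← cancel_mono (H.map (Q₁.map φ.s)), ← H.map_comp,
      MorphismProperty.LeftFraction.map_comp_map_s, hnat φ.f, hnat φ.s]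
    have hfs : L.map ((ObjectProperty.ι P).map φ.s) =
        L.map (SecondIsoAux.atFrac Ct P φ).s := rfl
    have hff : L.map ((ObjectProperty.ι P).map φ.f) =
        L.map (SecondIsoAux.atFrac Ct P φ).f := rfl
    rw [hfs, hff]
    simp only [Category.assoc, Iso.inv_hom_id_app_assoc,
      MorphismProperty.LeftFraction.map_comp_map_s_assoc]
    erw [MorphismProperty.LeftFraction.map_comp_map_s_assoc]
    rfl
  haveI hQ₁es : Q₁.EssSurj := Localization.essSurj Q₁ (serreWRes Ct P)
  -- faithfulness and fullness at the level of objects in the image of Q₁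
  have faith : H.Faithful := by
    refine ⟨fun {a b} u v huv => ?_⟩
    let X := Q₁.objPreimage a
    let Y := Q₁.objPreimage b
    let α : Q₁.obj X ≅ a := Q₁.objObjPreimageIso a
    let β : Q₁.obj Y ≅ b := Q₁.objObjPreimageIso b
    let u' := α.hom ≫ u ≫ β.inv
    let v' := α.hom ≫ v ≫ β.inv
    obtain ⟨φ₁, h1⟩ := Localization.exists_leftFraction Q₁ (serreWRes Ct P) u'
    obtain ⟨φ₂, h2⟩ := Localization.exists_leftFraction Q₁ (serreWRes Ct P) v'
    have hHuv : H.map u' = H.map v' := by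
      simp only [u', v', H.map_comp, huv]
    rw [h1, h2, key X Y φ₁, key X Y φ₂] at hHuv
    haveI := heiso X
    have hmap2 : (SecondIsoAux.atFrac Ct P φ₁).map L (Localization.inverts L (serreW Ct)) ≫
          e.inv.app Y =
        (SecondIsoAux.atFrac Ct P φ₂).map L (Localization.inverts L (serreW Ct)) ≫
          e.inv.app Y := (cancel_epi (e.hom.app X)).1 hHuv
    have hmap : (SecondIsoAux.atFrac Ct P φ₁).map L (Localization.inverts L (serreW Ct)) =
        (SecondIsoAux.atFrac Ct P φ₂).map L (Localization.inverts L (serreW Ct)) := by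
      haveI : IsIso (e.inv.app Y) := ⟨e.hom.app Y, by simp, by simp⟩
      exact (cancel_mono (e.inv.app Y)).1 hmap2
    have hrel := (MorphismProperty.LeftFraction.map_eq_iff L (serreW Ct) _ _).1 hmap
    have hrel₁ := SecondIsoAux.shrinkRel hCt hP φ₁ φ₂ hrel
    have heq : φ₁.map Q₁ (Localization.inverts Q₁ (serreWRes Ct P)) =
        φ₂.map Q₁ (Localization.inverts Q₁ (serreWRes Ct P)) :=
      (MorphismProperty.LeftFraction.map_eq_iff Q₁ (serreWRes Ct P) _ _).2 hrel₁
    have huv' : u' = v' := by rw [h1, h2, heq]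
    calc u = α.inv ≫ u' ≫ β.hom := by simp [u']
    _ = α.inv ≫ v' ≫ β.hom := by rw [huv']
    _ = v := by simp [v']
  have full : H.Full := by
    refine ⟨fun {a b} ψ => ?_⟩
    let X := Q₁.objPreimage a
    let Y := Q₁.objPreimage b
    let α : Q₁.obj X ≅ a := Q₁.objObjPreimageIso a
    let β : Q₁.obj Y ≅ b := Q₁.objObjPreimageIso b
    let ψ' : H.obj (Q₁.obj X) ⟶ H.obj (Q₁.obj Y) := H.map α.hom ≫ ψ ≫ H.map β.inv
    let χ : L.obj X.obj ⟶ L.obj Y.obj := e.inv.app X ≫ ψ' ≫ e.hom.app Y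
    obtain ⟨φ₂, hφ₂⟩ := Localization.exists_leftFraction L (serreW Ct) χ
    obtain ⟨ψf, i, hmono, hf, hs⟩ := SecondIsoAux.shrink hCt hP φ₂
    haveI := hmono
    have hrel : MorphismProperty.LeftFractionRel (SecondIsoAux.atFrac Ct P ψf) φ₂ := by
      refine ⟨φ₂.Y', i, 𝟙 _, ?_, ?_, ?_⟩
      · rw [Category.comp_id]; exact hs
      · rw [Category.comp_id]; exact hf
      · show serreW Ct ((ObjectProperty.ι P).map ψf.s ≫ i)
        rw [hs]; exact φ₂.hs
    have hmapeq : (SecondIsoAux.atFrac Ct P ψf).map L (Localization.inverts L (serreW Ct)) =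
        φ₂.map L (Localization.inverts L (serreW Ct)) :=
      (MorphismProperty.LeftFraction.map_eq_iff L (serreW Ct) _ _).2 hrel
    refine ⟨α.inv ≫ ψf.map Q₁ (Localization.inverts Q₁ (serreWRes Ct P)) ≫ β.hom, ?_⟩
    rw [H.map_comp, H.map_comp, key X Y ψf, hmapeq, ← hφ₂]
    show H.map α.inv ≫ (e.hom.app X ≫ (e.inv.app X ≫ ψ' ≫ e.hom.app Y) ≫ e.inv.app Y) ≫
        H.map β.hom = ψ
    simp only [Category.assoc, Iso.hom_inv_id_app_assoc, Iso.hom_inv_id_app,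
      Category.comp_id, ψ']
    simp only [← H.map_comp, Iso.inv_hom_id, Iso.hom_inv_id, ← Category.assoc]
    simp [← H.map_comp]
    erw [Category.id_comp, ← H.map_comp, Iso.inv_hom_id, H.map_id, Category.comp_id]
  have essSurj : H.EssSurj := by
    haveI := hess
    refine ⟨fun D => ?_⟩
    refine ⟨Q₁.obj ((ObjectProperty.ι P ⋙ L).objPreimage D),
      ⟨?_ ≪≫ ((ObjectProperty.ι P ⋙ L).objObjPreimageIso D)⟩⟩
    exact e.app _
  exact { faithful := faith, full := full, essSurj := essSurj }
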